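/- Any triangulation of the punctured n-gon other than the 'star' triangulation S_n (all edges joining the puncture to boundary vertices) contains a diagonal α that is close to the border, i.e., a diagonal cutting off a triangle with exactly two boundary edges. -/

import Mathlib

/-- A tagged edge of the punctured `n`-gon: a triple `(a, b, ε)`.  For `a ≠ b` it
represents the edge `M_{a,b}` (homotopic to the counterclockwise boundary path from
`a` to `b`, with the tag required to be `true`), and for `a = b` it represents a
tagged edge `M_{a,a}^ε` joining the puncture to the boundary vertex `a`. -/
abbrev TEdge (n : ℕ) := Fin n × Fin n × Bool

/-- The number of counterclockwise steps from `a` to `x` on the boundary. -/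
def ccwPos (n : ℕ) (a x : Fin n) : ℕ := (x.val + n - a.val) % n

/-- `x` lies strictly inside the counterclockwise boundary arc from `a` to `b`. -/
def InArc (n : ℕ) (a b x : Fin n) : Prop :=
  0 < ccwPos n a x ∧ ccwPos n a x < ccwPos n a b

/-- A valid tagged edge: either an edge `M_{a,a}^ε` between the puncture and the
boundary, or an ordinary edge `M_{a,b}` with `|δ_{a,b}| ≥ 3` and trivial tag. -/
def ValidEdge (n : ℕ) (e : TEdge n) : Prop :=
  e.1 = e.2.1 ∨ (e.2.2 = true ∧ 2 ≤ ccwPos n e.1 e.2.1)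

/-- The crossing relation (nonzero minimal crossing number) between tagged edges:
two edges between the puncture and the boundary cross iff they end at different
vertices and carry different tags; an edge between the puncture and the boundary
crosses an ordinary edge iff its boundary vertex lies strictly inside the arc cut
off; two ordinary edges cross iff their endpoints interleave, or each one lies
entirely strictly inside the puncture-free region cut off by the other. -/
def Cross (n : ℕ) (e f : TEdge n) : Prop :=
  if e.1 = e.2.1 then
    if f.1 = f.2.1 then e.1 ≠ f.1 ∧ e.2.2 ≠ f.2.2
    else InArc n f.1 f.2.1 e.1
  else if f.1 = f.2.1 then InArc n e.1 e.2.1 f.1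
  else
    Xor' (InArc n e.1 e.2.1 f.1) (InArc n e.1 e.2.1 f.2.1) ∨
      (InArc n e.1 e.2.1 f.1 ∧ InArc n e.1 e.2.1 f.2.1 ∧
        InArc n f.1 f.2.1 e.1 ∧ InArc n f.1 f.2.1 e.2.1)

/-- A triangulation of the punctured `n`-gon: a maximal set of pairwise
non-crossing (valid) tagged edges. -/
def IsTriangulation (n : ℕ) (Δ : Finset (TEdge n)) : Prop :=
  (∀ e ∈ Δ, ValidEdge n e) ∧
    (∀ e ∈ Δ, ∀ f ∈ Δ, ¬Cross n e f) ∧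
    (∀ e, ValidEdge n e → e ∉ Δ → ∃ f ∈ Δ, Cross n e f)

/-- The edge `e` is incident to the boundary vertex `p`. -/
def Incident (n : ℕ) (p : Fin n) (e : TEdge n) : Prop := e.1 = p ∨ e.2.1 = p

/-- Anticlockwise angular position at the boundary vertex `p` of an edge incident
to `p`: first the edges `M_{p,b}` leaving `p` (nested according to the arc they cut
off), then the tagged edges `M_{p,p}^ε` to the puncture, then the edges `M_{a,p}`
arriving at `p`. -/
def angKey (n : ℕ) (p : Fin n) (e : TEdge n) : ℕ :=
  if e.1 = p ∧ e.2.1 = p then n + (if e.2.2 then 0 else 1)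
  else if e.1 = p then ccwPos n p e.2.1
  else 2 * n + ccwPos n p e.1

/-- `β` is obtained from `α` by rotating anticlockwise about a common boundary
vertex `p`, with no edge of `Δ` strictly between them at `p` (so that `α` and `β`
bound a common triangle of `Δ`); the two tagged edges at a common vertex are
excluded. -/
def BoundaryArrow (n : ℕ) (Δ : Finset (TEdge n)) (α β : TEdge n) : Prop :=
  ∃ p : Fin n, Incident n p α ∧ Incident n p β ∧
    ¬(α.1 = α.2.1 ∧ β.1 = β.2.1) ∧
    angKey n p α < angKey n p β ∧
    ∀ γ ∈ Δ, Incident n p γ →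
      ¬(angKey n p α < angKey n p γ ∧ angKey n p γ < angKey n p β)

/-- `β` is obtained from `α` by rotating anticlockwise about the puncture: both are
edges between the puncture and the boundary and `β` is at the first vertex
counterclockwise after `α` carrying an edge of `Δ` to the puncture. -/
def PunctureArrow (n : ℕ) (Δ : Finset (TEdge n)) (α β : TEdge n) : Prop :=
  α.1 = α.2.1 ∧ β.1 = β.2.1 ∧ α.1 ≠ β.1 ∧
    ∀ γ ∈ Δ, γ.1 = γ.2.1 → γ.1 ≠ α.1 →
      ¬(ccwPos n α.1 γ.1 < ccwPos n α.1 β.1)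

/-- An arrow of the quiver of the triangulation `Δ`, before deleting 2-cycles. -/
def RawArrow (n : ℕ) (Δ : Finset (TEdge n)) (α β : TEdge n) : Prop :=
  α ∈ Δ ∧ β ∈ Δ ∧ α ≠ β ∧ (BoundaryArrow n Δ α β ∨ PunctureArrow n Δ α β)

/-- An arrow of the quiver `Q_Δ` associated to the triangulation `Δ` (oriented
2-cycles are deleted). -/
def QArrow (n : ℕ) (Δ : Finset (TEdge n)) (α β : TEdge n) : Prop :=
  RawArrow n Δ α β ∧ ¬RawArrow n Δ β α

/-- any triangulation of the punctured `n`-gon other than the star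
triangulation `S_n` (all of whose edges join the puncture to boundary vertices)
contains a diagonal close to the border, i.e. an edge `M_{a,b}` with
`|δ_{a,b}| = 3` (so `b = a + 2`), cutting off a triangle with exactly two
boundary edges. -/

lemma ccw_def {n : ℕ} (hn : 0 < n) (a b : Fin n) :
    ccwPos n a b = if a.val ≤ b.val then b.val - a.val else b.val + n - a.val := by
  have ha := a.isLt; have hb := b.isLt
  unfold ccwPos
  split
  · rw [show b.val + n - a.val = (b.val - a.val) + n by omega, Nat.add_mod_right]
    exact Nat.mod_eq_of_lt (by omega)
  · exact Nat.mod_eq_of_lt (by omega)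

lemma ccw_self {n : ℕ} (hn : 0 < n) (a : Fin n) : ccwPos n a a = 0 := by
  rw [ccw_def hn]; simp

lemma ccw_lt {n : ℕ} (hn : 0 < n) (a b : Fin n) : ccwPos n a b < n :=
  Nat.mod_lt _ hn

lemma ccw_inj {n : ℕ} (hn : 0 < n) {a x y : Fin n}
    (h : ccwPos n a x = ccwPos n a y) : x = y := by
  have h1 := a.isLt; have h2 := x.isLt; have h3 := y.isLt
  rw [ccw_def hn, ccw_def hn] at h
  apply Fin.ext
  split_ifs at h <;> omega

lemma ccw_diff {n : ℕ} (hn : 0 < n) (a x y : Fin n) :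
    ccwPos n x y =
      if ccwPos n a x ≤ ccwPos n a y then ccwPos n a y - ccwPos n a x
      else ccwPos n a y + n - ccwPos n a x := by
  have h1 := a.isLt; have h2 := x.isLt; have h3 := y.isLt
  simp only [ccw_def hn]
  split_ifs <;> omega

lemma inArc_def {n : ℕ} {a b x : Fin n} :
    InArc n a b x ↔ 0 < ccwPos n a x ∧ ccwPos n a x < ccwPos n a b := Iff.rfl

lemma cross_op {n : ℕ} {a b : Fin n} {t : Bool} {g : TEdge n}
    (he : ¬ a = b) (hg : g.1 = g.2.1) :
    Cross n (a, b, t) g ↔ InArc n a b g.1 := by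
  simp only [Cross]
  rw [if_neg he, if_pos hg]

lemma cross_oo {n : ℕ} {a b : Fin n} {t : Bool} {g : TEdge n}
    (he : ¬ a = b) (hg : ¬ g.1 = g.2.1) :
    Cross n (a, b, t) g ↔
      (Xor' (InArc n a b g.1) (InArc n a b g.2.1) ∨
        (InArc n a b g.1 ∧ InArc n a b g.2.1 ∧
          InArc n g.1 g.2.1 a ∧ InArc n g.1 g.2.1 b)) := by
  simp only [Cross]
  rw [if_neg he, if_neg hg]

theorem stmt_16 (n : ℕ) (hn : 5 ≤ n) (Δ : Finset (TEdge n))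
    (hΔ : IsTriangulation n Δ) (hstar : ¬∀ e ∈ Δ, e.1 = e.2.1) :
    ∃ e ∈ Δ, ccwPos n e.1 e.2.1 = 2 := by
  have hn0 : 0 < n := by omega
  push_neg at hstar
  obtain ⟨e0, he0Δ, he0⟩ := hstar
  obtain ⟨hΔv, hΔnc, hΔmax⟩ := hΔ
  obtain ⟨e, heT, hmin⟩ :=
    (Δ.filter (fun e => ¬ e.1 = e.2.1)).exists_min_image
      (fun e => ccwPos n e.1 e.2.1)
      ⟨e0, Finset.mem_filter.2 ⟨he0Δ, he0⟩⟩
  rw [Finset.mem_filter] at heT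
  obtain ⟨heΔ, hne⟩ := heT
  obtain ⟨a, b, t⟩ := e
  replace hne : ¬ a = b := hne
  replace hmin : ∀ x ∈ Δ.filter (fun e => ¬ e.1 = e.2.1),
      ccwPos n a b ≤ ccwPos n x.1 x.2.1 := hmin
  have hd2 : 2 ≤ ccwPos n a b := by
    rcases hΔv _ heΔ with h | h
    · exact absurd h hne
    · exact h.2
  by_cases hd2' : ccwPos n a b = 2
  · exact ⟨(a, b, t), heΔ, hd2'⟩
  have hdn : ccwPos n a b < n := ccw_lt hn0 _ _
  have hc2 : (a.val + 2) % n < n := Nat.mod_lt _ hn0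
  obtain ⟨c, hcc⟩ : ∃ c : Fin n, ccwPos n a c = 2 := by
    refine ⟨⟨(a.val + 2) % n, hc2⟩, ?_⟩
    have ha := a.isLt
    have h2 : (a.val + 2) % n = if a.val + 2 < n then a.val + 2 else a.val + 2 - n := by
      split
      · exact Nat.mod_eq_of_lt (by omega)
      · rw [Nat.mod_eq_sub_mod (by omega)]
        exact Nat.mod_eq_of_lt (by omega)
    rw [ccw_def hn0]
    show (if a.val ≤ (a.val + 2) % n then (a.val + 2) % n - a.val
      else (a.val + 2) % n + n - a.val) = 2
    rw [h2]
    split_ifs <;> omega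
  have hac : ¬ a = c := by
    intro h
    rw [← h, ccw_self hn0] at hcc
    omega
  by_cases hfΔ : ((a, c, true) : TEdge n) ∈ Δ
  · exact ⟨(a, c, true), hfΔ, hcc⟩
  obtain ⟨g, hgΔ, hcross⟩ := hΔmax (a, c, true) (Or.inr ⟨rfl, hcc.ge⟩) hfΔ
  have hng := hΔnc (a, b, t) heΔ g hgΔ
  exfalso
  by_cases hg : g.1 = g.2.1
  · rw [cross_op hac hg, inArc_def, hcc] at hcross
    rw [cross_op hne hg, inArc_def] at hng
    exact hng ⟨hcross.1, by omega⟩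
  · rw [cross_oo hac hg] at hcross
    rw [cross_oo hne hg] at hng
    simp only [inArc_def, Xor', Xor, hcc] at hcross hng
    have hsu : ccwPos n a g.1 ≠ ccwPos n a g.2.1 := fun h => hg (ccw_inj hn0 h)
    have hgmin : ccwPos n a b ≤ ccwPos n g.1 g.2.1 :=
      hmin g (Finset.mem_filter.2 ⟨hgΔ, hg⟩)
    have hgv : 2 ≤ ccwPos n g.1 g.2.1 := ((hΔv g hgΔ).resolve_left hg).2
    have h0 : ccwPos n a a = 0 := ccw_self hn0 a
    have E1 := ccw_diff hn0 a g.1 g.2.1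
    have E2 := ccw_diff hn0 a g.1 a
    have E3 := ccw_diff hn0 a g.1 b
    have hs := ccw_lt hn0 a g.1
    have hu := ccw_lt hn0 a g.2.1
    rw [h0] at E2
    split_ifs at E1 E2 E3 <;> omega
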